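/- arXiv:2511.10918 — 2 statements merged into one kernel-verified Lean document; each statement's English description precedes it below -/
import Mathlib

section
/- Let φ : M × Σ → ℝ be smooth, set 𝒱 = ∇_ξφ(M × Σ), and suppose there exist smooth c : M × Σ → ℝ and smooth A, B : 𝒱 × Σ → Sym_{n−1}(ℝ) with ∇_ξ²φ(x,ξ) = A(∇_ξφ(x,ξ), ξ) + c(x,ξ)·B(∇_ξφ(x,ξ), ξ) on M × Σ. Then for all (x,ξ) ∈ M × Σ one has the matrix identity (G(x,ξ)·∇_x)∇_ξ²φ(x,ξ) = ((G(x,ξ)·∇_x)c(x,ξ)) · B(∇_ξφ(x,ξ), ξ), and applying the derivative twice, (G(x,ξ)·∇_x)²∇_ξ²φ(x,ξ) = ((G(x,ξ)·∇_x)²c(x,ξ)) · B(∇_ξφ(x,ξ), ξ). -/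
open Metric Set Topology MeasureTheory

noncomputable section

/-- ξ-gradient ∇_ξφ(x,ξ). -/
def gradXi (n : ℕ) (φ : (Fin n → ℝ) → (Fin (n-1) → ℝ) → ℝ)
    (x : Fin n → ℝ) (ξ : Fin (n-1) → ℝ) : Fin (n-1) → ℝ :=
  fun j => fderiv ℝ (φ x) ξ (Pi.single j (1:ℝ))

/-- ξ-Hessian ∇_ξ²φ(x,ξ). -/
def hessXi (n : ℕ) (φ : (Fin n → ℝ) → (Fin (n-1) → ℝ) → ℝ)
    (x : Fin n → ℝ) (ξ : Fin (n-1) → ℝ) : Matrix (Fin (n-1)) (Fin (n-1)) ℝ :=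
  Matrix.of fun i j => fderiv ℝ (fun η => gradXi n φ x η i) ξ (Pi.single j (1:ℝ))

/-- Mixed Hessian ∇_x∇_ξφ(x,ξ) : entry (i,j) is ∂_{x_i}∂_{ξ_j}φ. -/
def mixedHess (n : ℕ) (φ : (Fin n → ℝ) → (Fin (n-1) → ℝ) → ℝ)
    (x : Fin n → ℝ) (ξ : Fin (n-1) → ℝ) : Matrix (Fin n) (Fin (n-1)) ℝ :=
  Matrix.of fun i j => fderiv ℝ (fun y => gradXi n φ y ξ j) x (Pi.single i (1:ℝ))

/-- Gauss map: G(x,ξ)ᵢ = det(∂_{ξ_1}∇_xφ, …, ∂_{ξ_{n-1}}∇_xφ, eᵢ), so that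
⟨G(x,ξ), w⟩ = det(∂_{ξ_1}∇_xφ, …, ∂_{ξ_{n-1}}∇_xφ, w) for all w. -/
def gaussMap (n : ℕ) (φ : (Fin n → ℝ) → (Fin (n-1) → ℝ) → ℝ)
    (x : Fin n → ℝ) (ξ : Fin (n-1) → ℝ) : Fin n → ℝ :=
  fun i => Matrix.det (Matrix.of fun a b : Fin n =>
    if h : (b : ℕ) < n - 1 then mixedHess n φ x ξ a ⟨(b : ℕ), h⟩
    else (Pi.single i (1:ℝ) : Fin n → ℝ) a)

/-- Directional derivative (G(x,ξ)·∇_x) f at x. -/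
def GD (n : ℕ) (φ : (Fin n → ℝ) → (Fin (n-1) → ℝ) → ℝ)
    (f : (Fin n → ℝ) → ℝ) (ξ : Fin (n-1) → ℝ) (x : Fin n → ℝ) : ℝ :=
  fderiv ℝ f x (gaussMap n φ x ξ)

/-- The matrix (G(x,ξ)·∇_x)∇_ξ²φ(x,ξ). -/
def GDhess (n : ℕ) (φ : (Fin n → ℝ) → (Fin (n-1) → ℝ) → ℝ)
    (x : Fin n → ℝ) (ξ : Fin (n-1) → ℝ) : Matrix (Fin (n-1)) (Fin (n-1)) ℝ :=
  Matrix.of fun i j => GD n φ (fun y => hessXi n φ y ξ i j) ξ x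

/-- The matrix (G(x,ξ)·∇_x)²∇_ξ²φ(x,ξ). -/
def GD2hess (n : ℕ) (φ : (Fin n → ℝ) → (Fin (n-1) → ℝ) → ℝ)
    (x : Fin n → ℝ) (ξ : Fin (n-1) → ℝ) : Matrix (Fin (n-1)) (Fin (n-1)) ℝ :=
  Matrix.of fun i j => GD n φ (fun y => GD n φ (fun z => hessXi n φ z ξ i j) ξ y) ξ x

/-- Bourgain's condition on M × Σ. -/
def BourgainCond (n : ℕ) (φ : (Fin n → ℝ) → (Fin (n-1) → ℝ) → ℝ)
    (M : Set (Fin n → ℝ)) (Ω : Set (Fin (n-1) → ℝ)) : Prop :=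
  ∃ lam : (Fin n → ℝ) → (Fin (n-1) → ℝ) → ℝ,
    ∀ x ∈ M, ∀ ξ ∈ Ω, GD2hess n φ x ξ = lam x ξ • GDhess n φ x ξ

/-- Hörmander-type phase function: smooth, (H1) and (H2) on M × Σ. -/
def IsHormander (n : ℕ) (φ : (Fin n → ℝ) → (Fin (n-1) → ℝ) → ℝ)
    (M : Set (Fin n → ℝ)) (Ω : Set (Fin (n-1) → ℝ)) : Prop :=
  ContDiffOn ℝ (⊤ : ℕ∞) (fun q : (Fin n → ℝ) × (Fin (n-1) → ℝ) => φ q.1 q.2) (M ×ˢ Ω) ∧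
  (∀ x ∈ M, ∀ ξ ∈ Ω, (mixedHess n φ x ξ).rank = n - 1) ∧
  (∀ x ∈ M, ∀ ξ ∈ Ω, (GDhess n φ x ξ).det ≠ 0)

/-- The point (x̄, t) ∈ ℝⁿ. -/
def toPt (n : ℕ) (xb : Fin (n-1) → ℝ) (t : ℝ) : Fin n → ℝ :=
  fun i => if h : (i : ℕ) < n - 1 then xb ⟨(i : ℕ), h⟩ else t

/-- line_{ξ,v} = {(v,0) − s(ξ,1) : s ∈ ℝ} ⊆ ℝⁿ. -/
def lineSet (n : ℕ) (ξ v : Fin (n-1) → ℝ) : Set (Fin n → ℝ) :=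
  {p | ∃ s : ℝ, p = toPt n v 0 - s • toPt n ξ 1}

end

section MainAux
open Metric Set Topology

theorem gradXi_cd (n : ℕ) (φ : (Fin n → ℝ) → (Fin (n-1) → ℝ) → ℝ)
    (M : Set (Fin n → ℝ)) (Ω : Set (Fin (n-1) → ℝ)) (hMo : IsOpen M) (hΩo : IsOpen Ω)
    (hφ : ContDiffOn ℝ (⊤ : ℕ∞) (fun q : (Fin n → ℝ) × (Fin (n-1) → ℝ) => φ q.1 q.2) (M ×ˢ Ω))
    {x : Fin n → ℝ} (hx : x ∈ M) {ξ : Fin (n-1) → ℝ} (hξ : ξ ∈ Ω) (j : Fin (n-1)) :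
    ContDiffAt ℝ (⊤:ℕ∞) (fun y => gradXi n φ y ξ j) x := by
  have h1 : ContDiffAt ℝ (⊤:ℕ∞) (fun q : (Fin n → ℝ) × (Fin (n-1) → ℝ) => φ q.1 q.2) (x, ξ) :=
    hφ.contDiffAt ((hMo.prod hΩo).mem_nhds ⟨hx, hξ⟩)
  have h2 : ContDiffAt ℝ (⊤:ℕ∞) (fun y => fderiv ℝ (φ y) ξ) x :=
    ContDiffAt.fderiv (f := φ) (g := fun _ => ξ) (m := (⊤:ℕ∞)) h1 contDiffAt_const (by norm_cast)
  exact h2.clm_apply contDiffAt_const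

theorem mixedHess_cd (n : ℕ) (φ : (Fin n → ℝ) → (Fin (n-1) → ℝ) → ℝ)
    (M : Set (Fin n → ℝ)) (Ω : Set (Fin (n-1) → ℝ)) (hMo : IsOpen M) (hΩo : IsOpen Ω)
    (hφ : ContDiffOn ℝ (⊤ : ℕ∞) (fun q : (Fin n → ℝ) × (Fin (n-1) → ℝ) => φ q.1 q.2) (M ×ˢ Ω))
    {x : Fin n → ℝ} (hx : x ∈ M) {ξ : Fin (n-1) → ℝ} (hξ : ξ ∈ Ω) (a : Fin n) (b : Fin (n-1)) :
    ContDiffAt ℝ (⊤:ℕ∞) (fun y => mixedHess n φ y ξ a b) x := by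
  have h2 : ContDiffAt ℝ (⊤:ℕ∞) (fun y => fderiv ℝ (fun z => gradXi n φ z ξ b) y) x :=
    ContDiffAt.fderiv_right (m := (⊤:ℕ∞))
      (gradXi_cd n φ M Ω hMo hΩo hφ hx hξ b) (by norm_cast)
  exact h2.clm_apply contDiffAt_const

theorem gaussMap_cd (n : ℕ) (φ : (Fin n → ℝ) → (Fin (n-1) → ℝ) → ℝ)
    (M : Set (Fin n → ℝ)) (Ω : Set (Fin (n-1) → ℝ)) (hMo : IsOpen M) (hΩo : IsOpen Ω)
    (hφ : ContDiffOn ℝ (⊤ : ℕ∞) (fun q : (Fin n → ℝ) × (Fin (n-1) → ℝ) => φ q.1 q.2) (M ×ˢ Ω))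
    {x : Fin n → ℝ} (hx : x ∈ M) {ξ : Fin (n-1) → ℝ} (hξ : ξ ∈ Ω) (i : Fin n) :
    ContDiffAt ℝ (⊤:ℕ∞) (fun y => gaussMap n φ y ξ i) x := by
  have hent : ∀ a b : Fin n, ContDiffAt ℝ (⊤:ℕ∞)
      (fun y => (Matrix.of fun a b : Fin n =>
        if h : (b : ℕ) < n - 1 then mixedHess n φ y ξ a ⟨(b : ℕ), h⟩
        else (Pi.single i (1:ℝ) : Fin n → ℝ) a) a b) x := by
    intro a b
    by_cases h : (b : ℕ) < n - 1
    · simpa [Matrix.of_apply, h] using mixedHess_cd n φ M Ω hMo hΩo hφ hx hξ a ⟨b, h⟩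
    · simpa [Matrix.of_apply, h] using contDiffAt_const
  unfold gaussMap
  simp only [Matrix.det_apply]
  apply ContDiffAt.sum
  intro σ _
  simp only [Units.smul_def, zsmul_eq_mul]
  exact contDiffAt_const.mul (contDiffAt_prod (fun a _ => hent (σ a) a))

theorem detid (n : ℕ) (hn : 2 ≤ n) (φ : (Fin n → ℝ) → (Fin (n-1) → ℝ) → ℝ)
    (x : Fin n → ℝ) (ξ : Fin (n-1) → ℝ) (j : Fin (n-1)) :
    ∑ i : Fin n, gaussMap n φ x ξ i * mixedHess n φ x ξ i j = 0 := by
  have hl : n - 1 < n := by omega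
  set l : Fin n := ⟨n-1, hl⟩ with hldef
  set M0 : Matrix (Fin n) (Fin n) ℝ := Matrix.of (fun a b : Fin n =>
    if h : (b : ℕ) < n - 1 then mixedHess n φ x ξ a ⟨(b : ℕ), h⟩
    else mixedHess n φ x ξ a j) with hM0
  have hbl : ∀ b : Fin n, ¬ ((b:ℕ) < n - 1) ↔ b = l := by
    intro b
    constructor
    · intro h; ext; simp only [hldef]; omega
    · intro h; subst h; exact lt_irrefl (n - 1)
  have hG : ∀ i : Fin n, gaussMap n φ x ξ i
      = Matrix.det (M0.updateCol l (Pi.single i (1:ℝ))) := by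
    intro i
    unfold gaussMap
    congr 1
    ext a b
    by_cases h : (b:ℕ) < n - 1
    · have hbne : b ≠ l := by intro hb; rw [← hbl b] at hb; exact hb h
      simp [Matrix.updateCol_apply, hbne, hM0, h]
    · have hbe : b = l := (hbl b).1 h
      simp [Matrix.updateCol_apply, hbe, hM0, h, (hbl l).2 rfl]
  let L : (Fin n → ℝ) →ₗ[ℝ] ℝ :=
    { toFun := fun w => Matrix.det (M0.updateCol l w)
      map_add' := fun u v => Matrix.det_updateCol_add M0 l u v
      map_smul' := fun s u => Matrix.det_updateCol_smul M0 l s u }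
  have h1 : ∑ i : Fin n, gaussMap n φ x ξ i * mixedHess n φ x ξ i j
      = L (fun a => mixedHess n φ x ξ a j) := by
    have : (fun a => mixedHess n φ x ξ a j)
        = ∑ i : Fin n, mixedHess n φ x ξ i j • (Pi.single i (1:ℝ) : Fin n → ℝ) := by
      rw [show (fun i : Fin n => mixedHess n φ x ξ i j • (Pi.single i (1:ℝ) : Fin n → ℝ))
            = fun i : Fin n => (Pi.single i (mixedHess n φ x ξ i j) : Fin n → ℝ) from ?_,
          Finset.univ_sum_single]
      funext i
      rw [← Pi.single_smul, smul_eq_mul, mul_one]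
    rw [this, map_sum]
    simp only [_root_.map_smul, smul_eq_mul]
    refine Finset.sum_congr rfl fun i _ => ?_
    rw [hG i, mul_comm]
    rfl
  rw [h1]
  have h2 : M0.updateCol l (fun a => mixedHess n φ x ξ a j) = M0 := by
    rw [show (fun a => mixedHess n φ x ξ a j) = fun a => M0 a l from ?_]
    · exact Matrix.updateCol_eq_self M0 l
    funext a
    simp [hM0, hldef]
  show Matrix.det (M0.updateCol l (fun a => mixedHess n φ x ξ a j)) = 0
  rw [h2]
  have hjl : (⟨(j:ℕ), by omega⟩ : Fin n) ≠ l := by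
    intro h
    have := congrArg (Fin.val) h
    simp only [hldef] at this
    omega
  apply Matrix.det_zero_of_column_eq hjl
  intro k
  simp [hM0, hldef, j.isLt]

end MainAux

theorem stmt3 (n : ℕ) (hn : 2 ≤ n)
    (M : Set (Fin n → ℝ)) (Ω : Set (Fin (n-1) → ℝ))
    (hMo : IsOpen M) (hMc : IsConnected M) (hΩo : IsOpen Ω) (hΩc : IsConnected Ω)
    (φ : (Fin n → ℝ) → (Fin (n-1) → ℝ) → ℝ)
    (hφ : ContDiffOn ℝ (⊤ : ℕ∞) (fun q : (Fin n → ℝ) × (Fin (n-1) → ℝ) => φ q.1 q.2) (M ×ˢ Ω))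
    (V : Set (Fin (n-1) → ℝ))
    (hV : V = (fun q : (Fin n → ℝ) × (Fin (n-1) → ℝ) => gradXi n φ q.1 q.2) '' (M ×ˢ Ω))
    (c : (Fin n → ℝ) → (Fin (n-1) → ℝ) → ℝ)
    (A B : (Fin (n-1) → ℝ) → (Fin (n-1) → ℝ) → Matrix (Fin (n-1)) (Fin (n-1)) ℝ)
    (hc : ContDiffOn ℝ (⊤ : ℕ∞) (fun q : (Fin n → ℝ) × (Fin (n-1) → ℝ) => c q.1 q.2) (M ×ˢ Ω))
    (hA : ∀ i j, ContDiffOn ℝ (⊤ : ℕ∞)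
      (fun q : (Fin (n-1) → ℝ) × (Fin (n-1) → ℝ) => A q.1 q.2 i j) (V ×ˢ Ω))
    (hBsm : ∀ i j, ContDiffOn ℝ (⊤ : ℕ∞)
      (fun q : (Fin (n-1) → ℝ) × (Fin (n-1) → ℝ) => B q.1 q.2 i j) (V ×ˢ Ω))
    (hsymm : ∀ v ξ, (v, ξ) ∈ V ×ˢ Ω → (A v ξ).IsSymm ∧ (B v ξ).IsSymm)
    (heq : ∀ x ∈ M, ∀ ξ ∈ Ω,
      hessXi n φ x ξ = A (gradXi n φ x ξ) ξ + c x ξ • B (gradXi n φ x ξ) ξ) :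
    ∀ x ∈ M, ∀ ξ ∈ Ω,
      GDhess n φ x ξ = (GD n φ (fun y => c y ξ) ξ x) • B (gradXi n φ x ξ) ξ ∧
      GD2hess n φ x ξ =
        (GD n φ (fun y => GD n φ (fun z => c z ξ) ξ y) ξ x) • B (gradXi n φ x ξ) ξ := by
  intro x hx ξ hξ
  set g : (Fin n → ℝ) → (Fin (n-1) → ℝ) := fun y => gradXi n φ y ξ with hg
  have hgV : ∀ y ∈ M, g y ∈ V := fun y hy => hV ▸ ⟨(y, ξ), ⟨hy, hξ⟩, rfl⟩
  -- g is differentiable on M with derivative killing the Gauss direction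
  have hkey : ∀ y ∈ M, ∃ D : (Fin n → ℝ) →L[ℝ] (Fin (n-1) → ℝ),
      HasFDerivAt g D y ∧ D (gaussMap n φ y ξ) = 0 := by
    intro y hy
    have hdj : ∀ j : Fin (n-1), DifferentiableAt ℝ (fun z => gradXi n φ z ξ j) y :=
      fun j => (gradXi_cd n φ M Ω hMo hΩo hφ hy hξ j).differentiableAt (by simp)
    refine ⟨ContinuousLinearMap.pi (fun j => fderiv ℝ (fun z => gradXi n φ z ξ j) y), ?_, ?_⟩
    · exact hasFDerivAt_pi.2 fun j => (hdj j).hasFDerivAt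
    · funext j
      have hGsum : (gaussMap n φ y ξ : Fin n → ℝ)
          = ∑ i : Fin n, gaussMap n φ y ξ i • (Pi.single i (1:ℝ) : Fin n → ℝ) := by
        rw [show (fun i : Fin n => gaussMap n φ y ξ i • (Pi.single i (1:ℝ) : Fin n → ℝ))
              = fun i : Fin n => (Pi.single i (gaussMap n φ y ξ i) : Fin n → ℝ) from ?_,
            Finset.univ_sum_single]
        funext i
        rw [← Pi.single_smul, smul_eq_mul, mul_one]
      show fderiv ℝ (fun z => gradXi n φ z ξ j) y (gaussMap n φ y ξ) = 0
      rw [hGsum, map_sum]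
      simp only [_root_.map_smul, smul_eq_mul]
      have : ∀ i : Fin n, fderiv ℝ (fun z => gradXi n φ z ξ j) y (Pi.single i (1:ℝ))
          = mixedHess n φ y ξ i j := fun i => rfl
      simp only [this]
      exact detid n hn φ y ξ j
  -- derivative of (smooth-on-V function) ∘ g along the Gauss direction vanishes
  have hcomp : ∀ y ∈ M, ∀ ψ : (Fin (n-1) → ℝ) → ℝ, DifferentiableWithinAt ℝ ψ V (g y) →
      ∃ E : (Fin n → ℝ) →L[ℝ] ℝ,
        HasFDerivAt (fun z => ψ (g z)) E y ∧ E (gaussMap n φ y ξ) = 0 := by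
    intro y hy ψ hψ
    obtain ⟨D, hD, hD0⟩ := hkey y hy
    refine ⟨(fderivWithin ℝ ψ V (g y)).comp D, ?_, ?_⟩
    · have h1 : HasFDerivWithinAt (fun z => ψ (g z)) ((fderivWithin ℝ ψ V (g y)).comp D) M y :=
        (hψ.hasFDerivWithinAt).comp y (hD.hasFDerivWithinAt) (fun z hz => hgV z hz)
      exact h1.hasFDerivAt (hMo.mem_nhds hy)
    · simp [ContinuousLinearMap.comp_apply, hD0]
  -- slices of A and B are differentiable within V
  have hslice : ∀ (T : (Fin (n-1) → ℝ) → (Fin (n-1) → ℝ) → Matrix (Fin (n-1)) (Fin (n-1)) ℝ),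
      (∀ i j, ContDiffOn ℝ (⊤ : ℕ∞)
        (fun q : (Fin (n-1) → ℝ) × (Fin (n-1) → ℝ) => T q.1 q.2 i j) (V ×ˢ Ω)) →
      ∀ i j, ∀ y ∈ M, DifferentiableWithinAt ℝ (fun v => T v ξ i j) V (g y) := by
    intro T hT i j y hy
    have h1 : ContDiffOn ℝ (⊤:ℕ∞) (fun v => T v ξ i j) V := by
      have := (hT i j).comp (f := fun v : Fin (n-1) → ℝ => (v, ξ))
        ((contDiff_id.prodMk contDiff_const).contDiffOn) (fun v hv => Set.mk_mem_prod hv hξ)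
      exact this
    exact (h1.differentiableOn (by simp)) (g y) (hgV y hy)
  -- slice of c is differentiable
  have hcsl : ∀ y ∈ M, DifferentiableAt ℝ (fun z => c z ξ) y := by
    intro y hy
    have h1 : ContDiffAt ℝ (⊤:ℕ∞) (fun q : (Fin n → ℝ) × (Fin (n-1) → ℝ) => c q.1 q.2) (y, ξ) :=
      hc.contDiffAt ((hMo.prod hΩo).mem_nhds ⟨hy, hξ⟩)
    exact (h1.comp y (contDiffAt_id.prodMk contDiffAt_const)).differentiableAt
      (by simp)
  -- Part 1, entrywise, at every point of M
  have part1 : ∀ y ∈ M, ∀ i j : Fin (n-1),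
      GD n φ (fun z => hessXi n φ z ξ i j) ξ y
        = (GD n φ (fun z => c z ξ) ξ y) * B (g y) ξ i j := by
    intro y hy i j
    obtain ⟨EA, hEA, hEA0⟩ := hcomp y hy (fun v => A v ξ i j) (hslice A hA i j y hy)
    obtain ⟨EB, hEB, hEB0⟩ := hcomp y hy (fun v => B v ξ i j) (hslice B hBsm i j y hy)
    have hcd : HasFDerivAt (fun z => c z ξ) (fderiv ℝ (fun z => c z ξ) y) y :=
      (hcsl y hy).hasFDerivAt
    have hprod : HasFDerivAt (fun z => c z ξ * B (g z) ξ i j)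
        (c y ξ • EB + B (g y) ξ i j • fderiv ℝ (fun z => c z ξ) y) y := hcd.mul hEB
    have htot : HasFDerivAt (fun z => A (g z) ξ i j + c z ξ * B (g z) ξ i j)
        (EA + (c y ξ • EB + B (g y) ξ i j • fderiv ℝ (fun z => c z ξ) y)) y := hEA.add hprod
    have heqloc : (fun z => hessXi n φ z ξ i j)
        =ᶠ[nhds y] (fun z => A (g z) ξ i j + c z ξ * B (g z) ξ i j) := by
      filter_upwards [hMo.mem_nhds hy] with z hz
      have := heq z hz ξ hξ
      rw [this]
      simp [Matrix.add_apply, Matrix.smul_apply, smul_eq_mul, hg]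
    have hhess : HasFDerivAt (fun z => hessXi n φ z ξ i j)
        (EA + (c y ξ • EB + B (g y) ξ i j • fderiv ℝ (fun z => c z ξ) y)) y :=
      htot.congr_of_eventuallyEq heqloc
    show fderiv ℝ (fun z => hessXi n φ z ξ i j) y (gaussMap n φ y ξ) = _
    rw [hhess.fderiv]
    simp only [ContinuousLinearMap.add_apply, ContinuousLinearMap.smul_apply,
      smul_eq_mul, hEA0, hEB0]
    show 0 + (c y ξ * 0 + B (g y) ξ i j * fderiv ℝ (fun z => c z ξ) y (gaussMap n φ y ξ)) = _
    ring_nf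
    rfl
  -- Part 2, entrywise, at x
  have part2 : ∀ i j : Fin (n-1),
      GD n φ (fun y => GD n φ (fun z => hessXi n φ z ξ i j) ξ y) ξ x
        = (GD n φ (fun y => GD n φ (fun z => c z ξ) ξ y) ξ x) * B (g x) ξ i j := by
    intro i j
    set Gc : (Fin n → ℝ) → ℝ := fun y => GD n φ (fun z => c z ξ) ξ y with hGcdef
    have hGc : DifferentiableAt ℝ Gc x := by
      have h1 : ContDiffAt ℝ (⊤:ℕ∞) (fun z => c z ξ) x := by
        have h0 : ContDiffAt ℝ (⊤:ℕ∞)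
            (fun q : (Fin n → ℝ) × (Fin (n-1) → ℝ) => c q.1 q.2) (x, ξ) :=
          hc.contDiffAt ((hMo.prod hΩo).mem_nhds ⟨hx, hξ⟩)
        exact h0.comp x (contDiffAt_id.prodMk contDiffAt_const)
      have h2 : ContDiffAt ℝ (⊤:ℕ∞) (fun y => fderiv ℝ (fun z => c z ξ) y) x :=
        h1.fderiv_right (m := (⊤:ℕ∞)) (by norm_cast)
      have h3 : ContDiffAt ℝ (⊤:ℕ∞) (fun y => gaussMap n φ y ξ) x :=
        contDiffAt_pi.2 (fun i => gaussMap_cd n φ M Ω hMo hΩo hφ hx hξ i)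
      exact (h2.clm_apply h3).differentiableAt (by simp)
    obtain ⟨EB, hEB, hEB0⟩ := hcomp x hx (fun v => B v ξ i j) (hslice B hBsm i j x hx)
    have hprod : HasFDerivAt (fun y => Gc y * B (g y) ξ i j)
        (Gc x • EB + B (g x) ξ i j • fderiv ℝ Gc x) x := (hGc.hasFDerivAt).mul hEB
    have heqloc : (fun y => GD n φ (fun z => hessXi n φ z ξ i j) ξ y)
        =ᶠ[nhds x] (fun y => Gc y * B (g y) ξ i j) := by
      filter_upwards [hMo.mem_nhds hx] with y hy
      exact part1 y hy i j
    have hF : HasFDerivAt (fun y => GD n φ (fun z => hessXi n φ z ξ i j) ξ y)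
        (Gc x • EB + B (g x) ξ i j • fderiv ℝ Gc x) x :=
      hprod.congr_of_eventuallyEq heqloc
    show fderiv ℝ (fun y => GD n φ (fun z => hessXi n φ z ξ i j) ξ y) x (gaussMap n φ x ξ) = _
    rw [hF.fderiv]
    simp only [ContinuousLinearMap.add_apply, ContinuousLinearMap.smul_apply,
      smul_eq_mul, hEB0]
    show Gc x * 0 + B (g x) ξ i j * fderiv ℝ Gc x (gaussMap n φ x ξ) = _
    ring_nf
    rfl
  constructor
  · ext i j
    have := part1 x hx i j
    simpa [GDhess, Matrix.smul_apply, smul_eq_mul, mul_comm] using this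
  · ext i j
    have := part2 i j
    simpa [GD2hess, Matrix.smul_apply, smul_eq_mul, mul_comm] using this
end

section
/- Consider Bourgain's worst-case phase φ_worst(x₁,x₂,t,ξ₁,ξ₂) = x₁ξ₁ + x₂ξ₂ + tξ₁ξ₂ + (1/2)t²ξ₂² on ℝ³ × ℝ². Its φ-curves are ℓ_{ξ,v} = {(v₁ − tξ₂, v₂ − tξ₁ − t²ξ₂, t) : t ∈ ℝ} (i.e., ∇_ξφ_worst((x₁,x₂,t),ξ) = v exactly for these points). The diffeomorphism F(x₁,x₂,t) = (x₁, x₂ − t·x₁, t) of ℝ³ straightens all of them simultaneously: for all (ξ,v) ∈ ℝ² × ℝ², F(ℓ_{ξ,v}) ⊆ {(v₁,v₂,0) + t·(−ξ₂, −(ξ₁ + v₁), 1) : t ∈ ℝ}, which is the line through (v₁,v₂,0) with direction (ξ₂, ξ₁ + v₁, −1); in particular F maps every φ_worst-curve onto a straight line, but the direction of the image line depends on v and not only on ξ. -/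
noncomputable section

/-- Bourgain's worst-case phase function on ℝ³ × ℝ², with points written (x₁,x₂,t). -/
def φworst (x : ℝ × ℝ × ℝ) (ξ : ℝ × ℝ) : ℝ :=
  x.1 * ξ.1 + x.2.1 * ξ.2 + x.2.2 * ξ.1 * ξ.2 + (1/2) * x.2.2^2 * ξ.2^2

/-- The ξ-gradient of a phase on ℝ³ × ℝ². -/
def grad2 (φ : (ℝ × ℝ × ℝ) → (ℝ × ℝ) → ℝ) (x : ℝ × ℝ × ℝ) (ξ : ℝ × ℝ) : ℝ × ℝ :=
  (fderiv ℝ (φ x) ξ (1, 0), fderiv ℝ (φ x) ξ (0, 1))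

/-- The straightening diffeomorphism F(x₁,x₂,t) = (x₁, x₂ − t·x₁, t). -/
def Fworst (x : ℝ × ℝ × ℝ) : ℝ × ℝ × ℝ := (x.1, x.2.1 - x.2.2 * x.1, x.2.2)

lemma gradφ (x : ℝ × ℝ × ℝ) (ξ : ℝ × ℝ) :
    grad2 φworst x ξ = (x.1 + x.2.2 * ξ.2, x.2.1 + x.2.2 * ξ.1 + x.2.2^2 * ξ.2) := by
  have h1 : HasFDerivAt (fun ξ : ℝ × ℝ => ξ.1) (ContinuousLinearMap.fst ℝ ℝ ℝ) ξ :=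
    hasFDerivAt_fst
  have h2 : HasFDerivAt (fun ξ : ℝ × ℝ => ξ.2) (ContinuousLinearMap.snd ℝ ℝ ℝ) ξ :=
    hasFDerivAt_snd
  have h := (((h1.const_mul x.1).add (h2.const_mul x.2.1)).add
      ((h1.mul h2).const_mul x.2.2)).add (((h2.mul h2).const_mul ((1/2) * x.2.2^2)))
  have hfun : φworst x = fun y : ℝ × ℝ =>
      x.1 * y.1 + x.2.1 * y.2 + x.2.2 * (y.1 * y.2) + 1/2 * x.2.2^2 * (y.2 * y.2) := by
    funext y; simp [φworst]; ring
  have h' : HasFDerivAt (fun y : ℝ × ℝ =>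
      x.1 * y.1 + x.2.1 * y.2 + x.2.2 * (y.1 * y.2) + 1/2 * x.2.2^2 * (y.2 * y.2)) _ ξ := h
  rw [grad2, hfun, h'.fderiv]
  simp [Prod.ext_iff]
  ring

theorem stmt8 (ξ₁ ξ₂ v₁ v₂ : ℝ) :
    (∀ x₁ x₂ t : ℝ,
      grad2 φworst (x₁, x₂, t) (ξ₁, ξ₂) = (v₁, v₂) ↔
        x₁ = v₁ - t * ξ₂ ∧ x₂ = v₂ - t * ξ₁ - t^2 * ξ₂) ∧
    (Fworst '' {x : ℝ × ℝ × ℝ | grad2 φworst x (ξ₁, ξ₂) = (v₁, v₂)}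
      = {q : ℝ × ℝ × ℝ | ∃ t : ℝ,
          q = (v₁ + t * (-ξ₂), v₂ + t * (-(ξ₁ + v₁)), 0 + t * 1)}) := by
  have key : ∀ x₁ x₂ t : ℝ,
      grad2 φworst (x₁, x₂, t) (ξ₁, ξ₂) = (v₁, v₂) ↔
        x₁ = v₁ - t * ξ₂ ∧ x₂ = v₂ - t * ξ₁ - t^2 * ξ₂ := by
    intro x₁ x₂ t
    rw [gradφ]
    simp only [Prod.mk.injEq]
    constructor <;> rintro ⟨a, b⟩ <;> constructor <;> nlinarith [sq_nonneg t]
  refine ⟨key, ?_⟩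
  ext q
  constructor
  · rintro ⟨⟨x₁, x₂, t⟩, hx, rfl⟩
    obtain ⟨h1, h2⟩ := (key x₁ x₂ t).1 hx
    refine ⟨t, ?_⟩
    simp only [Fworst, h1, h2, Prod.mk.injEq]
    refine ⟨by ring, by ring, by ring⟩
  · rintro ⟨t, rfl⟩
    refine ⟨(v₁ - t * ξ₂, v₂ - t * ξ₁ - t^2 * ξ₂, t), (key _ _ t).2 ⟨rfl, rfl⟩, ?_⟩
    simp only [Fworst, Prod.mk.injEq]
    refine ⟨by ring, by ring, by ring⟩
end
end
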